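/- There exist ε₀ > 0 and C > 0 (depending only on N, k, d, r, ξ₀) such that for every ε ∈ (0,ε₀), every admissible (μ,σ), every l ∈ {1,…,k} and every j ∈ {1,…,k} with j ≠ l, one has ∫_{A_l} U_j(x)^{p+1} dx ≤ C ε^{Nθ/(2k)}. -/

import Mathlib

open MeasureTheory Metric

/-- `α_N = (N(N-4)(N-2)(N+2))^((N-4)/8)`. -/
noncomputable def alphaN (N : ℕ) : ℝ :=
  ((N : ℝ) * ((N : ℝ) - 4) * ((N : ℝ) - 2) * ((N : ℝ) + 2)) ^ (((N : ℝ) - 4) / 8)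

/-- The critical exponent `p = (N+4)/(N-4)`. -/
noncomputable def pexp (N : ℕ) : ℝ := ((N : ℝ) + 4) / ((N : ℝ) - 4)

/-- The standard bubble `U_{μ,ξ}(x) = α_N (μ/(μ² + |x-ξ|²))^((N-4)/2)`. -/
noncomputable def bubble (N : ℕ) (μ : ℝ) (ξ : EuclideanSpace ℝ (Fin N))
    (x : EuclideanSpace ℝ (Fin N)) : ℝ :=
  alphaN N * (μ / (μ ^ 2 + ‖x - ξ‖ ^ 2)) ^ (((N : ℝ) - 4) / 2)

/-- `θ = 2k(N-2)/(2k(N-2)-2)`. -/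
noncomputable def theta (N k : ℕ) : ℝ :=
  (2 * (k : ℝ) * ((N : ℝ) - 2)) / (2 * (k : ℝ) * ((N : ℝ) - 2) - 2)

/-- `μ_{jε} = μ_j ε^((2j-1)θ/(2k))` (indices `j = 1, …, k`). -/
noncomputable def muScaled (N k : ℕ) (μ : ℕ → ℝ) (ε : ℝ) (j : ℕ) : ℝ :=
  μ j * ε ^ ((2 * (j : ℝ) - 1) * theta N k / (2 * (k : ℝ)))

/-- `ξ_{jε} = ξ₀ + μ_{jε} σ_j`. -/
noncomputable def xiScaled (N k : ℕ) (ξ₀ : EuclideanSpace ℝ (Fin N)) (μ : ℕ → ℝ)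
    (σ : ℕ → EuclideanSpace ℝ (Fin N)) (ε : ℝ) (j : ℕ) : EuclideanSpace ℝ (Fin N) :=
  ξ₀ + muScaled N k μ ε j • σ j

/-- `U_j = U_{μ_{jε}, ξ_{jε}}`. -/
noncomputable def Ubub (N k : ℕ) (ξ₀ : EuclideanSpace ℝ (Fin N)) (μ : ℕ → ℝ)
    (σ : ℕ → EuclideanSpace ℝ (Fin N)) (ε : ℝ) (j : ℕ)
    (x : EuclideanSpace ℝ (Fin N)) : ℝ :=
  bubble N (muScaled N k μ ε j) (xiScaled N k ξ₀ μ σ ε j) x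

/-- The annulus `A_l = B(ξ₀, √(μ_{lε}μ_{(l-1)ε})) ∖ B(ξ₀, √(μ_{lε}μ_{(l+1)ε}))`,
with the conventions `μ_{0ε}μ_{1ε} = r²` and `μ_{kε}μ_{(k+1)ε} = ε²`. -/
noncomputable def annulus (N k : ℕ) (ξ₀ : EuclideanSpace ℝ (Fin N)) (μ : ℕ → ℝ)
    (r ε : ℝ) (l : ℕ) : Set (EuclideanSpace ℝ (Fin N)) :=
  ball ξ₀ (if l = 1 then r else Real.sqrt (muScaled N k μ ε l * muScaled N k μ ε (l - 1))) \
  ball ξ₀ (if l = k then ε else Real.sqrt (muScaled N k μ ε l * muScaled N k μ ε (l + 1)))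

/-- `(μ,σ)` is admissible: `d < μ_j < 1/d` and `|σ_j| < 1/d` for `j = 1, …, k`. -/
def admissible (N k : ℕ) (d : ℝ) (μ : ℕ → ℝ) (σ : ℕ → EuclideanSpace ℝ (Fin N)) : Prop :=
  ∀ j, 1 ≤ j → j ≤ k → d < μ j ∧ μ j < 1 / d ∧ ‖σ j‖ < 1 / d

lemma alphaN_pos {N : ℕ} (hN : 5 ≤ N) : 0 < alphaN N := by
  have h5 : (5:ℝ) ≤ (N:ℝ) := by exact_mod_cast hN
  apply Real.rpow_pos_of_pos
  have h1 : (0:ℝ) < (N:ℝ) * ((N:ℝ) - 4) := by nlinarith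
  have h2 : (0:ℝ) < ((N:ℝ) - 2) * ((N:ℝ) + 2) := by nlinarith
  nlinarith

lemma bubble_rpow {N : ℕ} (hN : 5 ≤ N) {m : ℝ} (hm : 0 < m) (ξ x : EuclideanSpace ℝ (Fin N)) :
    bubble N m ξ x ^ (pexp N + 1)
      = alphaN N ^ (pexp N + 1) * (m / (m ^ 2 + ‖x - ξ‖ ^ 2)) ^ (N : ℕ) := by
  have h5 : (5:ℝ) ≤ (N:ℝ) := by exact_mod_cast hN
  have hb : 0 < m / (m ^ 2 + ‖x - ξ‖ ^ 2) := by positivity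
  have he : ((N:ℝ) - 4) / 2 * (pexp N + 1) = (N : ℝ) := by
    have h4 : (N:ℝ) - 4 ≠ 0 := by linarith
    unfold pexp
    field_simp
    ring
  unfold bubble
  rw [Real.mul_rpow (alphaN_pos hN).le (Real.rpow_nonneg hb.le _), ← Real.rpow_mul hb.le, he,
    Real.rpow_natCast]

lemma eps_rpow_pow_mul_inv {ε : ℝ} (hε : 0 < ε) (a b : ℝ) (n : ℕ) :
    (ε ^ a) ^ n * ((ε ^ b) ^ n)⁻¹ = ε ^ ((a - b) * n) := by
  rw [← Real.rpow_natCast (ε ^ a) n, ← Real.rpow_natCast (ε ^ b) n,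
    ← Real.rpow_mul hε.le, ← Real.rpow_mul hε.le, ← Real.rpow_neg hε.le, ← Real.rpow_add hε]
  ring_nf

lemma integral_tail (N : ℕ) (hN : 1 ≤ N) :
    ∃ I : ℝ, 0 ≤ I ∧ ∀ (ξ : EuclideanSpace ℝ (Fin N)) (s : ℝ), 0 < s →
      Integrable (fun x : EuclideanSpace ℝ (Fin N) =>
        (1 + ‖s⁻¹ • (x - ξ)‖) ^ (-(2 * (N:ℝ)))) ∧
      ∫ x : EuclideanSpace ℝ (Fin N), (1 + ‖s⁻¹ • (x - ξ)‖) ^ (-(2 * (N:ℝ)))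
        = s ^ (N : ℕ) * I := by
  set g : EuclideanSpace ℝ (Fin N) → ℝ := fun y => (1 + ‖y‖) ^ (-(2 * (N:ℝ))) with hg_def
  have hfr : (Module.finrank ℝ (EuclideanSpace ℝ (Fin N)) : ℝ) < 2 * (N:ℝ) := by
    rw [finrank_euclideanSpace_fin]
    have : (1:ℝ) ≤ (N:ℝ) := by exact_mod_cast hN
    linarith
  have hg : Integrable g := integrable_one_add_norm hfr
  refine ⟨∫ y, g y, integral_nonneg (fun y => Real.rpow_nonneg (by positivity) _),
    fun ξ s hs => ?_⟩
  have h1 : Integrable (fun x : EuclideanSpace ℝ (Fin N) => g (s⁻¹ • x)) :=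
    hg.comp_smul (inv_ne_zero hs.ne')
  constructor
  · have h2 := h1.comp_sub_right ξ
    simpa [hg_def] using h2
  · calc ∫ x : EuclideanSpace ℝ (Fin N), (1 + ‖s⁻¹ • (x - ξ)‖) ^ (-(2 * (N:ℝ)))
        = ∫ x : EuclideanSpace ℝ (Fin N), g (s⁻¹ • x) := by
          simpa [hg_def] using
            integral_sub_right_eq_self (μ := volume)
              (fun x : EuclideanSpace ℝ (Fin N) => g (s⁻¹ • x)) ξ
      _ = s ^ Module.finrank ℝ (EuclideanSpace ℝ (Fin N)) • ∫ y, g y :=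
          Measure.integral_comp_inv_smul_of_nonneg volume g hs.le
      _ = s ^ (N : ℕ) * ∫ y, g y := by
          rw [finrank_euclideanSpace_fin, smul_eq_mul]

lemma cont_aux {N : ℕ} {m : ℝ} (hm : 0 < m) (ξ : EuclideanSpace ℝ (Fin N)) (c : ℝ) :
    Continuous (fun x : EuclideanSpace ℝ (Fin N) =>
      c * (m / (m ^ 2 + ‖x - ξ‖ ^ 2)) ^ (N : ℕ)) := by
  have h1 : Continuous (fun x : EuclideanSpace ℝ (Fin N) => m ^ 2 + ‖x - ξ‖ ^ 2) := by
    continuity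
  have h2 : ∀ x : EuclideanSpace ℝ (Fin N), m ^ 2 + ‖x - ξ‖ ^ 2 ≠ 0 := by
    intro x; positivity
  exact continuous_const.mul ((continuous_const.div h1 h2).pow _)

set_option maxHeartbeats 2000000 in
/-- Lemma 6.6, estimate (6.14): `∫_{A_l} U_j^{p+1} = O(ε^{Nθ/(2k)})` for `j ≠ l`. -/
theorem statement2 (N k : ℕ) (hN : 5 ≤ N) (hk : 1 ≤ k)
    (ξ₀ : EuclideanSpace ℝ (Fin N)) (d r : ℝ) (hd0 : 0 < d) (hd1 : d < 1) (hr : 0 < r) :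
    ∃ ε₀ > (0 : ℝ), ∃ C > (0 : ℝ), ∀ ε : ℝ, 0 < ε → ε < ε₀ →
      ∀ (μ : ℕ → ℝ) (σ : ℕ → EuclideanSpace ℝ (Fin N)), admissible N k d μ σ →
      ∀ l, 1 ≤ l → l ≤ k → ∀ j, 1 ≤ j → j ≤ k → j ≠ l →
      ∫ x in annulus N k ξ₀ μ r ε l, Ubub N k ξ₀ μ σ ε j x ^ (pexp N + 1)
        ≤ C * ε ^ ((N : ℝ) * theta N k / (2 * (k : ℝ))) := by
  haveI : Nonempty (Fin N) := ⟨⟨0, by omega⟩⟩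
  have h5 : (5:ℝ) ≤ (N:ℝ) := by exact_mod_cast hN
  have hk1 : (1:ℝ) ≤ (k:ℝ) := by exact_mod_cast hk
  have hθ : 0 < theta N k := by
    unfold theta
    apply div_pos <;> nlinarith
  set t : ℝ := theta N k / (2 * (k:ℝ)) with ht_def
  have ht : 0 < t := div_pos hθ (by positivity)
  have hα : 0 < alphaN N := alphaN_pos hN
  obtain ⟨I, hI0, hItail⟩ := integral_tail N (by omega)
  set vN : ℝ := (volume (ball (0 : EuclideanSpace ℝ (Fin N)) 1)).toReal with hvN_def
  have hvN : 0 ≤ vN := ENNReal.toReal_nonneg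
  set αq : ℝ := alphaN N ^ (pexp N + 1) with hαq_def
  have hαq : 0 < αq := Real.rpow_pos_of_pos hα _
  set C : ℝ := αq * vN * (d ^ (2*N))⁻¹ + αq * 2 ^ (3*N) * I * (d ^ (2*N))⁻¹ + 1 with hC_def
  have hC1 : 0 ≤ αq * vN * (d ^ (2*N))⁻¹ := by positivity
  have hC2 : 0 ≤ αq * 2 ^ (3*N) * I * (d ^ (2*N))⁻¹ :=
    mul_nonneg (mul_nonneg (by positivity) hI0) (by positivity)
  refine ⟨min 1 ((d^3/2) ^ t⁻¹),
    lt_min one_pos (Real.rpow_pos_of_pos (by positivity) _), C, by rw [hC_def]; linarith, ?_⟩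
  intro ε hε hεlt μ σ hadm l hl1 hlk j hj1 hjk hjl
  have hε1 : ε < 1 := lt_of_lt_of_le hεlt (min_le_left _ _)
  have hεt : ε ^ t ≤ d ^ 3 / 2 := by
    have h2 : ε ≤ (d^3/2) ^ t⁻¹ := (lt_of_lt_of_le hεlt (min_le_right _ _)).le
    calc ε ^ t ≤ ((d^3/2) ^ t⁻¹) ^ t := Real.rpow_le_rpow hε.le h2 ht.le
      _ = d^3/2 := Real.rpow_inv_rpow (by positivity) ht.ne'
  have hmu_eq : ∀ i : ℕ, muScaled N k μ ε i = μ i * ε ^ ((2*(i:ℝ)-1) * t) := by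
    intro i
    unfold muScaled
    rw [ht_def, ← mul_div_assoc]
  have hmub : ∀ i, 1 ≤ i → i ≤ k →
      d * ε ^ ((2*(i:ℝ)-1) * t) ≤ muScaled N k μ ε i ∧
      muScaled N k μ ε i ≤ d⁻¹ * ε ^ ((2*(i:ℝ)-1) * t) := by
    intro i h1 h2
    obtain ⟨ha, hb, -⟩ := hadm i h1 h2
    have hεp : (0:ℝ) < ε ^ ((2*(i:ℝ)-1) * t) := Real.rpow_pos_of_pos hε _
    rw [hmu_eq i]
    constructor
    · exact mul_le_mul_of_nonneg_right ha.le hεp.le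
    · exact mul_le_mul_of_nonneg_right (by rw [← one_div]; exact hb.le) hεp.le
  have hmupos : ∀ i, 1 ≤ i → i ≤ k → 0 < muScaled N k μ ε i := by
    intro i h1 h2
    calc (0:ℝ) < d * ε ^ ((2*(i:ℝ)-1) * t) := by positivity
      _ ≤ _ := (hmub i h1 h2).1
  have hm : 0 < muScaled N k μ ε j := hmupos j hj1 hjk
  set m : ℝ := muScaled N k μ ε j with hm_def
  set ξj : EuclideanSpace ℝ (Fin N) := xiScaled N k ξ₀ μ σ ε j with hξj_def
  set A : Set (EuclideanSpace ℝ (Fin N)) := annulus N k ξ₀ μ r ε l with hA_def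
  have hA_meas : MeasurableSet A := by
    rw [hA_def]; unfold annulus; exact measurableSet_ball.diff measurableSet_ball
  have hUrw : ∀ x, Ubub N k ξ₀ μ σ ε j x ^ (pexp N + 1)
      = αq * (m / (m ^ 2 + ‖x - ξj‖ ^ 2)) ^ (N:ℕ) := by
    intro x
    rw [hαq_def]
    exact bubble_rpow hN hm ξj x
  have hfx_cont : Continuous (fun x : EuclideanSpace ℝ (Fin N) =>
      αq * (m / (m ^ 2 + ‖x - ξj‖ ^ 2)) ^ (N:ℕ)) := cont_aux hm ξj αq
  have hfx_nonneg : ∀ x : EuclideanSpace ℝ (Fin N),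
      0 ≤ αq * (m / (m ^ 2 + ‖x - ξj‖ ^ 2)) ^ (N:ℕ) := by
    intro x; positivity
  simp only [hUrw]
  have hgoalexp : (N:ℝ) * theta N k / (2 * (k:ℝ)) = (N:ℝ) * t := by rw [ht_def]; ring
  rw [hgoalexp]
  have hεNt : (0:ℝ) < ε ^ ((N:ℝ) * t) := Real.rpow_pos_of_pos hε _
  rcases lt_or_gt_of_ne hjl with hlt | hgt
  · -- case j < l : use sup bound and volume of the outer ball
    have hl2 : 2 ≤ l := by omega
    have hcast : ((l - 1 : ℕ) : ℝ) = (l:ℝ) - 1 := by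
      rw [Nat.cast_sub hl1, Nat.cast_one]
    set R : ℝ := Real.sqrt (muScaled N k μ ε l * muScaled N k μ ε (l-1)) with hR_def
    have hsub : A ⊆ ball ξ₀ R := by
      intro x hx
      rw [hA_def] at hx
      unfold annulus at hx
      rw [if_neg (by omega : l ≠ 1)] at hx
      exact hx.1
    have hRle : R ≤ d⁻¹ * ε ^ ((2*(l:ℝ)-2) * t) := by
      have hb1 := (hmub l hl1 hlk).2
      have hb2 := (hmub (l-1) (by omega) (by omega)).2
      rw [hcast] at hb2
      have hexp : (2*(l:ℝ)-1)*t + (2*((l:ℝ)-1)-1)*t = (2*(l:ℝ)-2)*t + (2*(l:ℝ)-2)*t := by ring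
      have hXX : d⁻¹ * ε ^ ((2*(l:ℝ)-1) * t) * (d⁻¹ * ε ^ ((2*((l:ℝ)-1)-1) * t))
          = d⁻¹ * ε ^ ((2*(l:ℝ)-2) * t) * (d⁻¹ * ε ^ ((2*(l:ℝ)-2) * t)) := by
        rw [mul_mul_mul_comm, ← Real.rpow_add hε, hexp, Real.rpow_add hε, ← mul_mul_mul_comm]
      have hle : muScaled N k μ ε l * muScaled N k μ ε (l-1)
          ≤ d⁻¹ * ε ^ ((2*(l:ℝ)-2) * t) * (d⁻¹ * ε ^ ((2*(l:ℝ)-2) * t)) := by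
        rw [← hXX]
        exact mul_le_mul hb1 hb2 (hmupos (l-1) (by omega) (by omega)).le (by positivity)
      calc R ≤ Real.sqrt (d⁻¹ * ε ^ ((2*(l:ℝ)-2) * t) * (d⁻¹ * ε ^ ((2*(l:ℝ)-2) * t))) :=
            Real.sqrt_le_sqrt hle
        _ = _ := Real.sqrt_mul_self (by positivity)
    set B1 : ℝ := αq * ((d * ε ^ ((2*(j:ℝ)-1) * t)) ^ (N:ℕ))⁻¹ with hB1_def
    have hB1pos : 0 ≤ B1 := by rw [hB1_def]; positivity
    have hptB : ∀ᵐ x ∂volume, x ∈ A →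
        ‖αq * (m / (m ^ 2 + ‖x - ξj‖ ^ 2)) ^ (N:ℕ)‖ ≤ B1 := by
      apply ae_of_all
      intro x _
      rw [Real.norm_eq_abs, abs_of_nonneg (hfx_nonneg x), hB1_def]
      apply mul_le_mul_of_nonneg_left _ hαq.le
      have h1 : m / (m ^ 2 + ‖x - ξj‖ ^ 2) ≤ (d * ε ^ ((2*(j:ℝ)-1) * t))⁻¹ := by
        have hmlow := (hmub j hj1 hjk).1
        calc m / (m ^ 2 + ‖x - ξj‖ ^ 2) ≤ m / m ^ 2 := by
              gcongr
              nlinarith [sq_nonneg ‖x - ξj‖]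
          _ = m⁻¹ := by rw [sq, ← div_div, div_self hm.ne', one_div]
          _ ≤ (d * ε ^ ((2*(j:ℝ)-1) * t))⁻¹ := by
              exact inv_anti₀ (by positivity) hmlow
      calc (m / (m ^ 2 + ‖x - ξj‖ ^ 2)) ^ (N:ℕ)
          ≤ ((d * ε ^ ((2*(j:ℝ)-1) * t))⁻¹) ^ (N:ℕ) := pow_le_pow_left₀ (by positivity) h1 N
        _ = ((d * ε ^ ((2*(j:ℝ)-1) * t)) ^ (N:ℕ))⁻¹ := by rw [inv_pow]
    have hvolA : volume A < ⊤ := lt_of_le_of_lt (measure_mono hsub) measure_ball_lt_top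
    have hkey := norm_setIntegral_le_of_norm_le_const_ae' hvolA hptB
    have hvol2 : (volume A).toReal ≤ (d⁻¹ * ε ^ ((2*(l:ℝ)-2) * t)) ^ (N:ℕ) * vN := by
      have h1 : (volume A).toReal ≤ (volume (ball ξ₀ R)).toReal :=
        ENNReal.toReal_mono measure_ball_lt_top.ne (measure_mono hsub)
      have h2 : (volume (ball ξ₀ R)).toReal = R ^ (N:ℕ) * vN := by
        rw [Measure.addHaar_ball _ _ (Real.sqrt_nonneg _), finrank_euclideanSpace_fin, hvN_def,
          ENNReal.toReal_mul, ENNReal.toReal_ofReal (by positivity)]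
      rw [h2] at h1
      exact h1.trans
        (mul_le_mul_of_nonneg_right (pow_le_pow_left₀ (Real.sqrt_nonneg _) hRle N) hvN)
    have hmono : ε ^ (((2*(l:ℝ)-2) * t - (2*(j:ℝ)-1) * t) * (N:ℕ)) ≤ ε ^ ((N:ℝ) * t) := by
      apply Real.rpow_le_rpow_of_exponent_ge hε hε1.le
      have hjl' : (j:ℝ) + 1 ≤ (l:ℝ) := by exact_mod_cast hlt
      have hNr : (1:ℝ) ≤ (N:ℝ) := by linarith
      nlinarith [mul_nonneg (mul_nonneg
        (by linarith : (0:ℝ) ≤ 2*(l:ℝ) - 2*(j:ℝ) - 2) ht.le) (by linarith : (0:ℝ) ≤ (N:ℝ))]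
    calc ∫ x in A, αq * (m / (m ^ 2 + ‖x - ξj‖ ^ 2)) ^ (N:ℕ)
        ≤ ‖∫ x in A, αq * (m / (m ^ 2 + ‖x - ξj‖ ^ 2)) ^ (N:ℕ)‖ := Real.le_norm_self _
      _ ≤ B1 * (volume A).toReal := hkey
      _ ≤ B1 * ((d⁻¹ * ε ^ ((2*(l:ℝ)-2) * t)) ^ (N:ℕ) * vN) :=
          mul_le_mul_of_nonneg_left hvol2 hB1pos
      _ = αq * vN * (d ^ (2*N))⁻¹
          * ((ε ^ ((2*(l:ℝ)-2) * t)) ^ (N:ℕ) * ((ε ^ ((2*(j:ℝ)-1) * t)) ^ (N:ℕ))⁻¹) := by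
          rw [hB1_def, mul_pow, mul_pow, mul_inv, inv_pow]
          rw [show 2*N = N + N by ring, pow_add, mul_inv]
          ring
      _ = αq * vN * (d ^ (2*N))⁻¹
          * ε ^ (((2*(l:ℝ)-2) * t - (2*(j:ℝ)-1) * t) * (N:ℕ)) := by
          rw [eps_rpow_pow_mul_inv hε]
      _ ≤ C * ε ^ ((N:ℝ) * t) := by
          apply mul_le_mul _ hmono (Real.rpow_nonneg hε.le _) (by rw [hC_def]; linarith)
          rw [hC_def]; linarith
  · -- case j > l : exterior bound
    have hcast : ((l + 1 : ℕ) : ℝ) = (l:ℝ) + 1 := by push_cast; ring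
    set ρ₀ : ℝ := d * ε ^ ((2*(l:ℝ)) * t) with hρ₀_def
    have hρ₀pos : 0 < ρ₀ := by rw [hρ₀_def]; positivity
    set ρ : ℝ := Real.sqrt (muScaled N k μ ε l * muScaled N k μ ε (l+1)) with hρ_def
    have hsubc : ∀ x ∈ A, ρ ≤ ‖x - ξ₀‖ := by
      intro x hx
      rw [hA_def] at hx
      unfold annulus at hx
      rw [if_neg (by omega : l ≠ k)] at hx
      have h2 := hx.2
      rw [mem_ball, not_lt, dist_eq_norm] at h2
      exact h2
    have hρge : ρ₀ ≤ ρ := by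
      have hb1 := (hmub l hl1 hlk).1
      have hb2 := (hmub (l+1) (by omega) (by omega)).1
      rw [hcast] at hb2
      have hexp : (2*(l:ℝ)-1)*t + (2*((l:ℝ)+1)-1)*t = (2*(l:ℝ))*t + (2*(l:ℝ))*t := by ring
      have hXX : d * ε ^ ((2*(l:ℝ)-1) * t) * (d * ε ^ ((2*((l:ℝ)+1)-1) * t)) = ρ₀ * ρ₀ := by
        rw [hρ₀_def, mul_mul_mul_comm, ← Real.rpow_add hε, hexp, Real.rpow_add hε,
          ← mul_mul_mul_comm]
      have hle : ρ₀ * ρ₀ ≤ muScaled N k μ ε l * muScaled N k μ ε (l+1) := by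
        rw [← hXX]
        exact mul_le_mul hb1 hb2 (by positivity) (hmupos l hl1 hlk).le
      calc ρ₀ = Real.sqrt (ρ₀ * ρ₀) := (Real.sqrt_mul_self hρ₀pos.le).symm
        _ ≤ ρ := Real.sqrt_le_sqrt hle
    set s : ℝ := ρ₀ / 2 with hs_def
    have hs : 0 < s := by rw [hs_def]; positivity
    have hcenter : ‖ξj - ξ₀‖ ≤ s := by
      rw [hξj_def]
      unfold xiScaled
      rw [add_sub_cancel_left, norm_smul, Real.norm_eq_abs, ← hm_def, abs_of_pos hm]
      obtain ⟨-, -, hσ⟩ := hadm j hj1 hjk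
      have hmle := (hmub j hj1 hjk).2
      have hεj : ε ^ ((2*(j:ℝ)-1) * t) ≤ ε ^ ((2*(l:ℝ)+1) * t) := by
        apply Real.rpow_le_rpow_of_exponent_ge hε hε1.le
        have hlj : (l:ℝ) + 1 ≤ (j:ℝ) := by exact_mod_cast hgt
        nlinarith [ht.le]
      have hsplit : ε ^ ((2*(l:ℝ)+1) * t) = ε ^ t * ε ^ ((2*(l:ℝ)) * t) := by
        rw [← Real.rpow_add hε]
        congr 1
        ring
      have h1d : ‖σ j‖ ≤ d⁻¹ := by rw [← one_div]; exact hσ.le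
      have hεl : 0 < ε ^ ((2*(l:ℝ)) * t) := Real.rpow_pos_of_pos hε _
      calc m * ‖σ j‖ ≤ d⁻¹ * ε ^ ((2*(j:ℝ)-1) * t) * d⁻¹ :=
            mul_le_mul hmle h1d (norm_nonneg _) (by positivity)
        _ ≤ d⁻¹ * (ε ^ t * ε ^ ((2*(l:ℝ)) * t)) * d⁻¹ := by
            rw [← hsplit]
            exact mul_le_mul_of_nonneg_right
              (mul_le_mul_of_nonneg_left hεj (by positivity)) (by positivity)
        _ ≤ d⁻¹ * (d^3/2 * ε ^ ((2*(l:ℝ)) * t)) * d⁻¹ := by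
            apply mul_le_mul_of_nonneg_right _ (by positivity)
            exact mul_le_mul_of_nonneg_left
              (mul_le_mul_of_nonneg_right hεt hεl.le) (by positivity)
        _ = s := by
            rw [hs_def, hρ₀_def]
            field_simp
    have hfar : ∀ x ∈ A, s ≤ ‖x - ξj‖ := by
      intro x hx
      have h1 := hsubc x hx
      have h2 : ‖x - ξ₀‖ - ‖ξj - ξ₀‖ ≤ ‖x - ξj‖ := by
        have h3 := norm_sub_norm_le (x - ξ₀) (ξj - ξ₀)
        rwa [sub_sub_sub_cancel_right] at h3
      have h4 : 2 * s = ρ₀ := by rw [hs_def]; ring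
      linarith
    set c0 : ℝ := αq * m ^ (N:ℕ) * (2/s) ^ (2*N) with hc0_def
    have hc0 : 0 ≤ c0 := by rw [hc0_def]; positivity
    obtain ⟨hint_g, hval_g⟩ := hItail ξj s hs
    set h : EuclideanSpace ℝ (Fin N) → ℝ :=
      fun x => c0 * (1 + ‖s⁻¹ • (x - ξj)‖) ^ (-(2 * (N:ℝ))) with hh_def
    have hh_nonneg : ∀ x, 0 ≤ h x := fun x =>
      mul_nonneg hc0 (Real.rpow_nonneg (by positivity) _)
    have hh_int : Integrable h := hint_g.const_mul c0
    have hpt : ∀ x ∈ A, αq * (m / (m ^ 2 + ‖x - ξj‖ ^ 2)) ^ (N:ℕ) ≤ h x := by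
      intro x hx
      have hzge := hfar x hx
      set z : ℝ := ‖x - ξj‖ with hz_def
      have hz0 : 0 < z := lt_of_lt_of_le hs hzge
      have hw : ‖s⁻¹ • (x - ξj)‖ = s⁻¹ * z := by
        rw [norm_smul, Real.norm_eq_abs, abs_of_pos (inv_pos.mpr hs)]
      have hwpos : 0 < 1 + s⁻¹ * z := by positivity
      have hrpow : (1 + s⁻¹ * z) ^ (-(2 * (N:ℝ))) = ((1 + s⁻¹ * z) ^ (2*N : ℕ))⁻¹ := by
        rw [← Real.rpow_natCast (1 + s⁻¹ * z) (2*N), ← Real.rpow_neg hwpos.le]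
        congr 1
        push_cast
        ring
      rw [hh_def]
      simp only
      rw [hw, hrpow, hc0_def]
      have hb1 : (m / (m^2 + z^2)) ^ (N:ℕ) ≤ (m / z^2) ^ (N:ℕ) := by
        apply pow_le_pow_left₀ (by positivity)
        gcongr
        nlinarith [sq_nonneg m]
      have hb2 : (1 + s⁻¹*z) ^ (2*N:ℕ) ≤ (2/s)^(2*N:ℕ) * z^(2*N:ℕ) := by
        rw [← mul_pow]
        apply pow_le_pow_left₀ hwpos.le
        have h1 : 1 ≤ s⁻¹ * z := by
          rw [inv_mul_eq_div]
          exact (one_le_div hs).mpr hzge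
        have h2 : 2/s*z = 2*(s⁻¹*z) := by
          rw [div_eq_mul_inv]; ring
        rw [h2]; linarith
      have hzN : (m / z^2) ^ (N:ℕ) = m^(N:ℕ) * (z^(2*N:ℕ))⁻¹ := by
        rw [div_pow, div_eq_mul_inv, ← pow_mul]
      have hwp : 0 < (1+s⁻¹*z) ^ (2*N:ℕ) := by positivity
      have hfin : (z^(2*N:ℕ))⁻¹ ≤ (2/s)^(2*N:ℕ) * ((1+s⁻¹*z)^(2*N:ℕ))⁻¹ := by
        have h3 : ((2/s)^(2*N:ℕ) * z^(2*N:ℕ))⁻¹ ≤ ((1+s⁻¹*z)^(2*N:ℕ))⁻¹ :=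
          inv_anti₀ hwp hb2
        calc (z^(2*N:ℕ))⁻¹ = (2/s)^(2*N:ℕ) * ((2/s)^(2*N:ℕ) * z^(2*N:ℕ))⁻¹ := by
              rw [mul_inv]
              rw [← mul_assoc, mul_inv_cancel₀ (by positivity : ((2:ℝ)/s)^(2*N:ℕ) ≠ 0), one_mul]
          _ ≤ (2/s)^(2*N:ℕ) * ((1+s⁻¹*z)^(2*N:ℕ))⁻¹ :=
              mul_le_mul_of_nonneg_left h3 (by positivity)
      calc αq * (m / (m^2+z^2))^(N:ℕ) ≤ αq * (m/z^2)^(N:ℕ) :=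
            mul_le_mul_of_nonneg_left hb1 hαq.le
        _ = αq * (m^(N:ℕ) * (z^(2*N:ℕ))⁻¹) := by rw [hzN]
        _ ≤ αq * (m^(N:ℕ) * ((2/s)^(2*N:ℕ) * ((1+s⁻¹*z)^(2*N:ℕ))⁻¹)) := by
            apply mul_le_mul_of_nonneg_left _ hαq.le
            exact mul_le_mul_of_nonneg_left hfin (by positivity)
        _ = αq * m^(N:ℕ) * (2/s)^(2*N) * ((1+s⁻¹*z)^(2*N:ℕ))⁻¹ := by ring
    have hfi : IntegrableOn
        (fun x : EuclideanSpace ℝ (Fin N) => αq * (m / (m ^ 2 + ‖x - ξj‖ ^ 2)) ^ (N:ℕ)) A := by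
      apply Integrable.mono' hh_int.integrableOn hfx_cont.aestronglyMeasurable.restrict
      rw [ae_restrict_iff' hA_meas]
      apply ae_of_all
      intro x hx
      rw [Real.norm_eq_abs, abs_of_nonneg (hfx_nonneg x)]
      exact hpt x hx
    have hstep3 : ∫ x, h x = c0 * (s ^ (N:ℕ) * I) := by
      rw [hh_def]
      rw [MeasureTheory.integral_const_mul, hval_g]
    have he1 : c0 * s ^ (N:ℕ) = αq * 2^(3*N) * (m^(N:ℕ) * (ρ₀ ^ (N:ℕ))⁻¹) := by
      rw [hc0_def, hs_def]
      have hss : ρ₀ / 2 ≠ 0 := by positivity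
      rw [show 3*N = N + 2*N by ring, show 2*(N:ℕ) = N + N by ring]
      have hρN : ρ₀ ^ N ≠ 0 := by positivity
      simp only [pow_add, div_pow]
      field_simp
    have hmN : m^(N:ℕ) ≤ (d⁻¹ * ε ^ ((2*(j:ℝ)-1) * t))^(N:ℕ) :=
      pow_le_pow_left₀ hm.le (hmub j hj1 hjk).2 N
    have hmono : ε ^ (((2*(j:ℝ)-1) * t - (2*(l:ℝ)) * t) * (N:ℕ)) ≤ ε ^ ((N:ℝ) * t) := by
      apply Real.rpow_le_rpow_of_exponent_ge hε hε1.le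
      have hlj : (l:ℝ) + 1 ≤ (j:ℝ) := by exact_mod_cast hgt
      have hNr : (1:ℝ) ≤ (N:ℝ) := by linarith
      nlinarith [mul_nonneg (mul_nonneg
        (by linarith : (0:ℝ) ≤ 2*(j:ℝ) - 2*(l:ℝ) - 2) ht.le) (by linarith : (0:ℝ) ≤ (N:ℝ))]
    calc ∫ x in A, αq * (m / (m ^ 2 + ‖x - ξj‖ ^ 2)) ^ (N:ℕ)
        ≤ ∫ x in A, h x := setIntegral_mono_on hfi hh_int.integrableOn hA_meas hpt
      _ ≤ ∫ x, h x := setIntegral_le_integral hh_int (ae_of_all _ hh_nonneg)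
      _ = c0 * s ^ (N:ℕ) * I := by rw [hstep3]; ring
      _ = αq * 2^(3*N) * I * (m^(N:ℕ) * (ρ₀ ^ (N:ℕ))⁻¹) := by rw [he1]; ring
      _ ≤ αq * 2^(3*N) * I * ((d⁻¹ * ε ^ ((2*(j:ℝ)-1) * t))^(N:ℕ) * (ρ₀ ^ (N:ℕ))⁻¹) := by
          apply mul_le_mul_of_nonneg_left _ (mul_nonneg (by positivity) hI0)
          exact mul_le_mul_of_nonneg_right hmN (by positivity)
      _ = αq * 2^(3*N) * I * (d ^ (2*N))⁻¹
          * ((ε ^ ((2*(j:ℝ)-1) * t)) ^ (N:ℕ) * ((ε ^ ((2*(l:ℝ)) * t)) ^ (N:ℕ))⁻¹) := by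
          rw [hρ₀_def, mul_pow, mul_pow, mul_inv, inv_pow]
          rw [show 2*N = N + N by ring, pow_add, mul_inv]
          ring
      _ = αq * 2^(3*N) * I * (d ^ (2*N))⁻¹
          * ε ^ (((2*(j:ℝ)-1) * t - (2*(l:ℝ)) * t) * (N:ℕ)) := by
          rw [eps_rpow_pow_mul_inv hε]
      _ ≤ C * ε ^ ((N:ℝ) * t) := by
          apply mul_le_mul _ hmono (Real.rpow_nonneg hε.le _) (by rw [hC_def]; linarith)
          rw [hC_def]; linarith
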